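/- Let u and v be an incompatible pair of vertices at minimum distance among all incompatible pairs in a 2-connected non-geodetic signed graph Σ. Then there exist two internally disjoint shortest u–v paths in Σ of opposite signs. -/

import Mathlib

open SimpleGraph Polynomial

variable {V : Type*}

/-- The sign of a walk: the product of the signs of its edges. -/
def walkSign {G : SimpleGraph V} (sg : V → V → ℤ) {u v : V} (p : G.Walk u v) : ℤ :=
  (p.darts.map fun d => sg d.toProd.1 d.toProd.2).prod

/-- `sigmaMax G sg u v`: the maximum sign over all shortest `u`–`v` paths. -/
noncomputable def sigmaMax (G : SimpleGraph V) (sg : V → V → ℤ) (u v : V) : ℤ := by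
  classical
  exact if ∃ p : G.Walk u v, p.length = G.dist u v ∧ walkSign sg p = 1 then 1 else -1

/-- `sigmaMin G sg u v`: the minimum sign over all shortest `u`–`v` paths. -/
noncomputable def sigmaMin (G : SimpleGraph V) (sg : V → V → ℤ) (u v : V) : ℤ := by
  classical
  exact if ∃ p : G.Walk u v, p.length = G.dist u v ∧ walkSign sg p = -1 then -1 else 1

/-- `u` and `v` are distance-compatible: all shortest `u`–`v` paths have the same sign. -/
def pairCompatible (G : SimpleGraph V) (sg : V → V → ℤ) (u v : V) : Prop :=
  ∀ p q : G.Walk u v, p.length = G.dist u v → q.length = G.dist u v →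
    walkSign sg p = walkSign sg q

/-- The `n`-th power graph: `u ~ v` iff `u ≠ v` and `d(u,v) ≤ n`. -/
def powerGraph (G : SimpleGraph V) (n : ℕ) : SimpleGraph V where
  Adj u v := u ≠ v ∧ G.dist u v ≤ n
  symm := by
    constructor
    intro u v h
    exact ⟨h.1.symm, by rw [SimpleGraph.dist_comm]; exact h.2⟩
  loopless := by
    constructor
    intro u h
    exact h.1 rfl

/-- A signed graph is balanced if every cycle has positive sign. -/
def SBalanced (G : SimpleGraph V) (sg : V → V → ℤ) : Prop :=
  ∀ ⦃u : V⦄ (p : G.Walk u u), p.IsCycle → walkSign sg p = 1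

/-- 2-connectedness: at least 3 vertices and deleting any vertex leaves a connected graph. -/
def TwoConnected [Fintype V] (G : SimpleGraph V) : Prop :=
  3 ≤ Fintype.card V ∧ ∀ v : V, ((⊤ : G.Subgraph).deleteVerts {v}).coe.Connected

/-- Signature of the associated signed complete graph `K^{D^max}(Σ)`:
edges of `G` keep their sign, non-adjacent pairs get `sigmaMax`. -/
noncomputable def kSigMax (G : SimpleGraph V) (sg : V → V → ℤ) (u v : V) : ℤ := by
  classical
  exact if G.Adj u v then sg u v else sigmaMax G sg u v

/-- Signature of the associated signed complete graph `K^{D^min}(Σ)`. -/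
noncomputable def kSigMin (G : SimpleGraph V) (sg : V → V → ℤ) (u v : V) : ℤ := by
  classical
  exact if G.Adj u v then sg u v else sigmaMin G sg u v

lemma walkSign_nil {G : SimpleGraph V} (sg : V → V → ℤ) (u : V) :
    walkSign sg (SimpleGraph.Walk.nil : G.Walk u u) = 1 := rfl

lemma walkSign_cons {G : SimpleGraph V} (sg : V → V → ℤ) {u v w : V}
    (h : G.Adj u v) (p : G.Walk v w) :
    walkSign sg (SimpleGraph.Walk.cons h p) = sg u v * walkSign sg p := by
  simp [walkSign, SimpleGraph.Walk.darts_cons]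

lemma walkSign_append {G : SimpleGraph V} (sg : V → V → ℤ) {u v w : V}
    (p : G.Walk u v) (q : G.Walk v w) :
    walkSign sg (p.append q) = walkSign sg p * walkSign sg q := by
  simp [walkSign, SimpleGraph.Walk.darts_append]

lemma walkSign_pm {G : SimpleGraph V} {sg : V → V → ℤ}
    (hval : ∀ u v, G.Adj u v → sg u v = 1 ∨ sg u v = -1) {u v : V}
    (p : G.Walk u v) : walkSign sg p = 1 ∨ walkSign sg p = -1 := by
  induction p with
  | nil => left; rfl
  | cons h p ih =>
    rw [walkSign_cons]
    rcases hval _ _ h with h1 | h1 <;> rcases ih with h2 | h2 <;>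
      simp [h1, h2]

theorem minimal_incompatible_pair_two_disjoint_geodesics {V : Type*} [Fintype V] (G : SimpleGraph V) (sg : V → V → ℤ)
    (hconn : G.Connected) (hsym : ∀ u v, sg u v = sg v u)
    (hval : ∀ u v, G.Adj u v → sg u v = 1 ∨ sg u v = -1)
    (h2 : TwoConnected G)
    (hgeo : ∃ (x y : V) (p q : G.Walk x y), p.IsPath ∧ q.IsPath ∧
      p.length = G.dist x y ∧ q.length = G.dist x y ∧ p ≠ q)
    (u v : V) (huv : ¬ pairCompatible G sg u v)
    (hmin : ∀ x y : V, ¬ pairCompatible G sg x y → G.dist u v ≤ G.dist x y) :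
    ∃ p q : G.Walk u v, p.IsPath ∧ q.IsPath ∧
      p.length = G.dist u v ∧ q.length = G.dist u v ∧
      walkSign sg p = 1 ∧ walkSign sg q = -1 ∧
      ∀ w : V, w ∈ p.support → w ∈ q.support → w = u ∨ w = v := by
  classical
  have key : ∀ p q : G.Walk u v, p.length = G.dist u v → q.length = G.dist u v →
      walkSign sg p = 1 → walkSign sg q = -1 →
      ∃ p q : G.Walk u v, p.IsPath ∧ q.IsPath ∧
        p.length = G.dist u v ∧ q.length = G.dist u v ∧
        walkSign sg p = 1 ∧ walkSign sg q = -1 ∧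
        ∀ w : V, w ∈ p.support → w ∈ q.support → w = u ∨ w = v := by
    intro p q hp hq sp sq
    refine ⟨p, q, p.isPath_of_length_eq_dist hp, q.isPath_of_length_eq_dist hq, hp, hq,
      sp, sq, ?_⟩
    intro w hwp hwq
    by_contra hcon
    push_neg at hcon
    obtain ⟨hwu, hwv⟩ := hcon
    exfalso
    have hp1 : (p.takeUntil w hwp).length + (p.dropUntil w hwp).length = p.length := by
      rw [← SimpleGraph.Walk.length_append, SimpleGraph.Walk.take_spec]
    have hq1 : (q.takeUntil w hwq).length + (q.dropUntil w hwq).length = q.length := by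
      rw [← SimpleGraph.Walk.length_append, SimpleGraph.Walk.take_spec]
    have d1p : G.dist u w ≤ (p.takeUntil w hwp).length := SimpleGraph.dist_le _
    have d2p : G.dist w v ≤ (p.dropUntil w hwp).length := SimpleGraph.dist_le _
    have d1q : G.dist u w ≤ (q.takeUntil w hwq).length := SimpleGraph.dist_le _
    have d2q : G.dist w v ≤ (q.dropUntil w hwq).length := SimpleGraph.dist_le _
    have htri : G.dist u v ≤ G.dist u w + G.dist w v := hconn.dist_triangle
    have e1p : (p.takeUntil w hwp).length = G.dist u w := by omega
    have e2p : (p.dropUntil w hwp).length = G.dist w v := by omega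
    have e1q : (q.takeUntil w hwq).length = G.dist u w := by omega
    have e2q : (q.dropUntil w hwq).length = G.dist w v := by omega
    have pos1 : 0 < G.dist u w := hconn.pos_dist_of_ne (fun h => hwu h.symm)
    have pos2 : 0 < G.dist w v := hconn.pos_dist_of_ne hwv
    have lt1 : G.dist u w < G.dist u v := by omega
    have lt2 : G.dist w v < G.dist u v := by omega
    have cuw : pairCompatible G sg u w := by
      by_contra h
      have := hmin _ _ h
      omega
    have cwv : pairCompatible G sg w v := by
      by_contra h
      have := hmin _ _ h
      omega
    have s1 : walkSign sg (p.takeUntil w hwp) = walkSign sg (q.takeUntil w hwq) :=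
      cuw _ _ e1p e1q
    have s2 : walkSign sg (p.dropUntil w hwp) = walkSign sg (q.dropUntil w hwq) :=
      cwv _ _ e2p e2q
    have sps : walkSign sg (p.takeUntil w hwp) * walkSign sg (p.dropUntil w hwp) = 1 := by
      rw [← walkSign_append, SimpleGraph.Walk.take_spec]; exact sp
    have sqs : walkSign sg (q.takeUntil w hwq) * walkSign sg (q.dropUntil w hwq) = -1 := by
      rw [← walkSign_append, SimpleGraph.Walk.take_spec]; exact sq
    rw [s1, s2] at sps
    omega
  rw [pairCompatible] at huv
  push_neg at huv
  obtain ⟨p, q, hp, hq, hne⟩ := huv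
  rcases walkSign_pm hval p with sp | sp <;> rcases walkSign_pm hval q with sq | sq
  · exact absurd (sp.trans sq.symm) hne
  · exact key p q hp hq sp sq
  · exact key q p hq hp sq sp
  · exact absurd (sp.trans sq.symm) hne
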